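/- Let α > 1 and β > α/2 + 1 be real numbers, let C₀ > 0, and let (κ_j)_{j≥1} be a nonincreasing sequence of positive reals with κ_j − κ_{j+1} ≥ C₀ j^{-(α+1)} for every j ≥ 1. Then there exists a constant C₁ > 0 such that for every j ≥ 1, Σ_{k≥1, k≠j} k^{-2(α+β)} (κ_j − κ_k)^{-4} ≤ C₁ (1 + j^{2α−2β+4} + log(j+1)). (This is inequality (5.25) of the paper.) -/

import Mathlib

open Finset

section HHaux

lemma hh_tele_sum (s : Finset ℕ) (hs : ∀ m ∈ s, 1 ≤ m) :
    ∑ m ∈ s, (((m:ℝ))⁻¹ - ((m:ℝ)+1)⁻¹) ≤ 1 := by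
  classical
  set N := s.sup id with hN
  have hsub : s ⊆ Finset.Icc 1 N := by
    intro m hm
    exact Finset.mem_Icc.2 ⟨hs m hm, Finset.le_sup (f := id) hm⟩
  have hnonneg : ∀ m ∈ Finset.Icc 1 N, 0 ≤ ((m:ℝ))⁻¹ - ((m:ℝ)+1)⁻¹ := by
    intro m hm
    have h1 : (1:ℝ) ≤ m := by exact_mod_cast (Finset.mem_Icc.1 hm).1
    have : ((m:ℝ)+1)⁻¹ ≤ ((m:ℝ))⁻¹ := by
      apply inv_anti₀ (by linarith) (by linarith)
    linarith
  have hle : ∑ m ∈ s, (((m:ℝ))⁻¹ - ((m:ℝ)+1)⁻¹)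
      ≤ ∑ m ∈ Finset.Icc 1 N, (((m:ℝ))⁻¹ - ((m:ℝ)+1)⁻¹) :=
    Finset.sum_le_sum_of_subset_of_nonneg hsub (fun m hm _ => hnonneg m hm)
  refine hle.trans ?_
  have heq : ∑ m ∈ Finset.Icc 1 N, (((m:ℝ))⁻¹ - ((m:ℝ)+1)⁻¹)
      = ∑ i ∈ Finset.range N, ((((i+1:ℕ)):ℝ)⁻¹ - (((i+1+1:ℕ)):ℝ)⁻¹) := by
    rw [← Finset.Ico_add_one_right_eq_Icc, Finset.sum_Ico_eq_sum_range]
    apply Finset.sum_congr (by simp) (fun i _ => by push_cast; ring_nf)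
  rw [heq, Finset.sum_range_sub' (fun i => (((i+1:ℕ)):ℝ)⁻¹) N]
  have h2 : (0:ℝ) ≤ (((N+1:ℕ)):ℝ)⁻¹ := by positivity
  push_cast
  norm_num
  linarith

lemma hh_invsq_sum (s : Finset ℕ) (hs : ∀ m ∈ s, 1 ≤ m) :
    ∑ m ∈ s, (((m:ℝ))^2)⁻¹ ≤ 2 := by
  have h : ∀ m ∈ s, (((m:ℝ))^2)⁻¹ ≤ 2*(((m:ℝ))⁻¹ - ((m:ℝ)+1)⁻¹) := by
    intro m hm
    have h1 : (1:ℝ) ≤ m := by exact_mod_cast hs m hm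
    have hm0 : (0:ℝ) < m := by linarith
    have e : 2*(((m:ℝ))⁻¹ - ((m:ℝ)+1)⁻¹) = 2 / ((m:ℝ)*((m:ℝ)+1)) := by
      field_simp
      ring
    rw [e, inv_eq_one_div, div_le_div_iff₀ (by positivity) (by positivity)]
    nlinarith
  calc ∑ m ∈ s, (((m:ℝ))^2)⁻¹ ≤ ∑ m ∈ s, 2*(((m:ℝ))⁻¹ - ((m:ℝ)+1)⁻¹) :=
        Finset.sum_le_sum h
    _ = 2 * ∑ m ∈ s, (((m:ℝ))⁻¹ - ((m:ℝ)+1)⁻¹) := by rw [Finset.mul_sum]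
    _ ≤ 2 * 1 := by linarith [hh_tele_sum s hs]
    _ = 2 := by norm_num

lemma hh_kappa_mono (κ : ℕ → ℝ) (hmono : ∀ j : ℕ, 1 ≤ j → κ (j + 1) ≤ κ j) :
    ∀ a b : ℕ, 1 ≤ a → a ≤ b → κ b ≤ κ a := by
  intro a b ha hab
  induction b, hab using Nat.le_induction with
  | base => exact le_refl _
  | succ n hn ih => exact (hmono n (le_trans ha hn)).trans ih

lemma hh_kappa_gap (α C₀ : ℝ) (κ : ℕ → ℝ) (hC₀ : 0 < C₀) (hα : 0 < α)
    (hgap : ∀ j : ℕ, 1 ≤ j → C₀ * (j : ℝ) ^ (-(α + 1)) ≤ κ j - κ (j + 1)) :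
    ∀ a b : ℕ, 1 ≤ a → a < b →
      C₀ * ((b - a : ℕ):ℝ) * ((b:ℕ):ℝ) ^ (-(α+1)) ≤ κ a - κ b := by
  intro a b ha hab
  have hp : -(α+1) ≤ 0 := by linarith
  induction b, hab using Nat.le_induction with
  | base =>
      have h1 : ((a+1-a:ℕ):ℝ) = 1 := by simp
      rw [h1, mul_one]
      have h2 : ((a+1:ℕ):ℝ) ^ (-(α+1)) ≤ (a:ℝ) ^ (-(α+1)) := by
        apply Real.rpow_le_rpow_of_nonpos (by exact_mod_cast ha) (by push_cast; linarith) hp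
      calc C₀ * ((a+1:ℕ):ℝ) ^ (-(α+1)) ≤ C₀ * (a:ℝ) ^ (-(α+1)) := by
            exact mul_le_mul_of_nonneg_left h2 hC₀.le
        _ ≤ κ a - κ (a+1) := hgap a ha
  | succ n hn ih =>
      have hn1 : 1 ≤ n := le_trans ha (Nat.le_of_succ_le hn)
      have han : a ≤ n := Nat.le_of_succ_le hn
      have hcast : ((n+1-a:ℕ):ℝ) = ((n-a:ℕ):ℝ) + 1 := by
        have : n+1-a = (n-a)+1 := by omega
        rw [this]; push_cast; ring
      have hrpow : ((n+1:ℕ):ℝ) ^ (-(α+1)) ≤ (n:ℝ) ^ (-(α+1)) := by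
        apply Real.rpow_le_rpow_of_nonpos (by exact_mod_cast hn1) (by push_cast; linarith) hp
      have hstep := hgap n hn1
      have ihn := ih
      have key : C₀ * (((n-a:ℕ):ℝ) + 1) * ((n+1:ℕ):ℝ) ^ (-(α+1))
          ≤ C₀ * (((n-a:ℕ):ℝ) + 1) * (n:ℝ) ^ (-(α+1)) := by
        exact mul_le_mul_of_nonneg_left hrpow (by positivity)
      have expand : C₀ * (((n-a:ℕ):ℝ) + 1) * (n:ℝ) ^ (-(α+1))
          = C₀ * ((n-a:ℕ):ℝ) * (n:ℝ) ^ (-(α+1)) + C₀ * (n:ℝ) ^ (-(α+1)) := by ring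
      rw [hcast]
      calc C₀ * (((n-a:ℕ):ℝ) + 1) * ((n+1:ℕ):ℝ) ^ (-(α+1))
          ≤ C₀ * ((n-a:ℕ):ℝ) * (n:ℝ) ^ (-(α+1)) + C₀ * (n:ℝ) ^ (-(α+1)) := by
            rw [← expand]; exact key
        _ ≤ (κ a - κ n) + (κ n - κ (n+1)) := add_le_add ihn hstep
        _ = κ a - κ (n+1) := by ring

lemma hh_inv_pow4_bound {g c : ℝ} (hc : 0 < c) (h : c ≤ g ∨ c ≤ -g) :
    ((g)^4)⁻¹ ≤ (c^4)⁻¹ := by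
  have hle : c^4 ≤ g^4 := by
    rcases h with h | h
    · exact pow_le_pow_left₀ hc.le h 4
    · have h4 : c^4 ≤ (-g)^4 := pow_le_pow_left₀ hc.le h 4
      have : (-g)^4 = g^4 := Even.neg_pow (by decide) g
      linarith
  exact inv_anti₀ (by positivity) hle

lemma hh_sq_le {d : ℝ} (hd1 : 1 ≤ d) : (d^4)⁻¹ ≤ (d^2)⁻¹ := by
  apply inv_anti₀ (by positivity)
  nlinarith [sq_nonneg d, sq_nonneg (d*d), sq_nonneg (d-1), sq_nonneg (d+1)]

lemma hh_assemble {A M P u v t : ℝ} (hA : 0 ≤ A) (hAM : A ≤ M) (hP : 0 ≤ P)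
    (hu : 0 ≤ u) (huv : u ≤ v) (ht : t ≤ A * (u * P)) :
    t ≤ M * P * v := by
  have hM : 0 ≤ M := hA.trans hAM
  have h1 : t ≤ M * (u * P) := ht.trans (mul_le_mul_of_nonneg_right hAM (by positivity))
  have h2 : M * (u * P) ≤ M * P * v := by
    nlinarith [mul_nonneg (mul_nonneg hM hP) (sub_nonneg.2 huv)]
  linarith

end HHaux

set_option maxHeartbeats 1000000 in
lemma hh_pointwise (α β C₀ : ℝ) (hα : 1 < α) (hβ : α / 2 + 1 < β) (hC₀ : 0 < C₀)
    (κ : ℕ → ℝ)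
    (hmono : ∀ j : ℕ, 1 ≤ j → κ (j + 1) ≤ κ j)
    (hgap : ∀ j : ℕ, 1 ≤ j → C₀ * (j : ℝ) ^ (-(α + 1)) ≤ κ j - κ (j + 1))
    (j k : ℕ) (hj : 1 ≤ j) (hk : 1 ≤ k) (hkj : k ≠ j) :
    (k : ℝ) ^ (-(2 * (α + β))) * ((κ j - κ k) ^ 4)⁻¹
      ≤ ((C₀^4)⁻¹ * (2:ℝ) ^ (4*α+4+2*(α+β))) * (1 + (j:ℝ) ^ (2*α-2*β+4)) *
        ((((k:ℝ))^2)⁻¹ + (((if k < j then j - k else k - j : ℕ):ℝ)^2)⁻¹) := by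
  have hgapt := hh_kappa_gap α C₀ κ hC₀ (by linarith) hgap
  have hmont := hh_kappa_mono κ hmono
  set q : ℝ := 2*(α+β) with hqdef
  set e : ℝ := 2*α-2*β+4 with hedef
  have hk0 : (0:ℝ) < k := by exact_mod_cast hk
  have hk1 : (1:ℝ) ≤ k := by exact_mod_cast hk
  have hj0 : (0:ℝ) < j := by exact_mod_cast hj
  have hj1 : (1:ℝ) ≤ j := by exact_mod_cast hj
  have hq0 : 0 < q := by rw [hqdef]; nlinarith
  have hq2 : 2 ≤ q := by rw [hqdef]; nlinarith
  have heα : e ≤ α + 2 := by rw [hedef]; nlinarith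
  have hje : 0 ≤ (j:ℝ) ^ e := Real.rpow_nonneg hj0.le e
  have pow4 : ∀ (x r : ℝ), 0 ≤ x → (x ^ r) ^ (4:ℕ) = x ^ (r*4) := by
    intro x r hx
    rw [← Real.rpow_natCast (x ^ r) 4, ← Real.rpow_mul hx]
    norm_num
  have hkm2 : (k:ℝ) ^ (-(2:ℝ)) = (((k:ℝ))^2)⁻¹ := by
    rw [Real.rpow_neg hk0.le, show ((2:ℝ)) = ((2:ℕ):ℝ) by norm_num, Real.rpow_natCast]
  -- constant comparisons
  have hM2 : ∀ x : ℝ, x ≤ 4*α+4+q → (2:ℝ)^x ≤ (2:ℝ)^(4*α+4+q) :=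
    fun x hx => Real.rpow_le_rpow_of_exponent_le one_le_two hx
  have hC4 : (0:ℝ) < (C₀^4)⁻¹ := by positivity
  -- bound k^(e-2) ≤ 1 + j^e  (valid when k ≤ j)
  have hke_bound : k ≤ j → (k:ℝ) ^ (e-2) ≤ 1 + (j:ℝ) ^ e := by
    intro hkle
    rcases le_or_gt (e-2) 0 with h | h
    · have := Real.rpow_le_one_of_one_le_of_nonpos hk1 h
      linarith
    · have h1 : (k:ℝ) ^ (e-2) ≤ (j:ℝ) ^ (e-2) :=
        Real.rpow_le_rpow hk0.le (by exact_mod_cast hkle) h.le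
      have h2 : (j:ℝ) ^ (e-2) ≤ (j:ℝ) ^ e :=
        Real.rpow_le_rpow_of_exponent_le hj1 (by linarith)
      linarith
  rcases lt_or_gt_of_ne hkj with hlt | hgt
  · -- k < j
    rw [if_pos hlt]
    have hd1 : (1:ℝ) ≤ ((j-k:ℕ):ℝ) := by
      have : 1 ≤ j - k := by omega
      exact_mod_cast this
    set d : ℝ := ((j-k:ℕ):ℝ) with hddef
    have hd0 : 0 < d := by linarith
    rcases le_or_gt (2*k) j with h2k | h2k
    · -- case 1 : 2k ≤ j
      have hg := hgapt k (2*k) hk (by omega)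
      have hmm : κ j ≤ κ (2*k) := hmont (2*k) j (by omega) h2k
      have hsimp : C₀ * ((2*k - k:ℕ):ℝ) * ((2*k:ℕ):ℝ) ^ (-(α+1))
          = C₀ * (2:ℝ)^(-(α+1)) * (k:ℝ)^(-α) := by
        have h1 : ((2*k - k:ℕ):ℝ) = (k:ℝ) := by
          have : 2*k - k = k := by omega
          rw [this]
        have h2 : ((2*k:ℕ):ℝ) = 2*(k:ℝ) := by push_cast; ring
        rw [h1, h2, Real.mul_rpow (by norm_num) hk0.le]
        have h3 : (k:ℝ) * (k:ℝ)^(-(α+1)) = (k:ℝ)^(-α) := by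
          nth_rewrite 1 [← Real.rpow_one (k:ℝ)]
          rw [← Real.rpow_add hk0]
          congr 1; ring
        rw [show C₀ * (k:ℝ) * ((2:ℝ)^(-(α+1)) * (k:ℝ)^(-(α+1)))
            = C₀ * (2:ℝ)^(-(α+1)) * ((k:ℝ) * (k:ℝ)^(-(α+1))) from by ring, h3]
      have hcpos : 0 < C₀ * (2:ℝ)^(-(α+1)) * (k:ℝ)^(-α) := by positivity
      have hdiff : C₀ * (2:ℝ)^(-(α+1)) * (k:ℝ)^(-α) ≤ -(κ j - κ k) := by
        rw [← hsimp]
        have : -(κ j - κ k) = κ k - κ j := by ring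
        rw [this]; linarith
      have hinv : ((κ j - κ k)^4)⁻¹ ≤ ((C₀ * (2:ℝ)^(-(α+1)) * (k:ℝ)^(-α))^4)⁻¹ :=
        hh_inv_pow4_bound hcpos (Or.inr hdiff)
      have hc4 : ((C₀ * (2:ℝ)^(-(α+1)) * (k:ℝ)^(-α))^4)⁻¹
          = (C₀^4)⁻¹ * (2:ℝ)^(4*α+4) * (k:ℝ)^(4*α) := by
        rw [mul_pow, mul_pow, pow4 2 _ (by norm_num), pow4 (k:ℝ) _ hk0.le,
            mul_inv, mul_inv,
            ← Real.rpow_neg (by norm_num : (0:ℝ) ≤ 2), ← Real.rpow_neg hk0.le]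
        rw [show -(-(α+1)*4) = 4*α+4 from by ring, show -(-α*4) = 4*α from by ring]
      rw [hc4] at hinv
      have step1 : (k:ℝ)^(-q) * ((κ j - κ k)^4)⁻¹
          ≤ (k:ℝ)^(-q) * ((C₀^4)⁻¹ * (2:ℝ)^(4*α+4) * (k:ℝ)^(4*α)) :=
        mul_le_mul_of_nonneg_left hinv (Real.rpow_nonneg hk0.le _)
      have step2 : (k:ℝ)^(-q) * ((C₀^4)⁻¹ * (2:ℝ)^(4*α+4) * (k:ℝ)^(4*α))
          = (C₀^4)⁻¹ * (2:ℝ)^(4*α+4) * ((k:ℝ)^(-(2:ℝ)) * (k:ℝ)^(e-2)) := by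
        rw [show (k:ℝ)^(-q) * ((C₀^4)⁻¹ * (2:ℝ)^(4*α+4) * (k:ℝ)^(4*α))
            = (C₀^4)⁻¹ * (2:ℝ)^(4*α+4) * ((k:ℝ)^(-q) * (k:ℝ)^(4*α)) from by ring,
          ← Real.rpow_add hk0, ← Real.rpow_add hk0]
        congr 2
        rw [hqdef, hedef]; ring
      have step3 : (C₀^4)⁻¹ * (2:ℝ)^(4*α+4) * ((k:ℝ)^(-(2:ℝ)) * (k:ℝ)^(e-2))
          ≤ (C₀^4)⁻¹ * (2:ℝ)^(4*α+4) * ((((k:ℝ))^2)⁻¹ * (1 + (j:ℝ)^e)) := by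
        rw [hkm2]
        apply mul_le_mul_of_nonneg_left _ (by positivity)
        exact mul_le_mul_of_nonneg_left (hke_bound hlt.le) (by positivity)
      apply hh_assemble (by positivity) ?_ (by positivity) (by positivity)
          (le_add_of_nonneg_right (by positivity)) (le_trans step1 (le_trans (le_of_eq step2) step3))
      exact mul_le_mul_of_nonneg_left (hM2 (4*α+4) (by linarith)) hC4.le
    · -- case 2 : k < j < 2k
      have hg := hgapt k j hk hlt
      have hcpos : 0 < C₀ * d * (j:ℝ)^(-(α+1)) := by positivity
      have hdiff : C₀ * d * (j:ℝ)^(-(α+1)) ≤ -(κ j - κ k) := by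
        have : -(κ j - κ k) = κ k - κ j := by ring
        rw [this, hddef]; exact hg
      have hinv : ((κ j - κ k)^4)⁻¹ ≤ ((C₀ * d * (j:ℝ)^(-(α+1)))^4)⁻¹ :=
        hh_inv_pow4_bound hcpos (Or.inr hdiff)
      have hc4 : ((C₀ * d * (j:ℝ)^(-(α+1)))^4)⁻¹
          = (C₀^4)⁻¹ * (d^4)⁻¹ * (j:ℝ)^(4*α+4) := by
        rw [mul_pow, mul_pow, pow4 (j:ℝ) _ hj0.le, mul_inv, mul_inv,
            ← Real.rpow_neg hj0.le]
        rw [show -(-(α+1)*4) = 4*α+4 from by ring]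
      rw [hc4] at hinv
      have hkq : (k:ℝ)^(-q) ≤ (2:ℝ)^q * (j:ℝ)^(-q) := by
        have hhalf : (j:ℝ)/2 ≤ (k:ℝ) := by
          have : (j:ℝ) ≤ 2*(k:ℝ) := by exact_mod_cast h2k.le
          linarith
        have h1 : (k:ℝ)^(-q) ≤ ((j:ℝ)/2)^(-q) :=
          Real.rpow_le_rpow_of_nonpos (by positivity) hhalf (by linarith)
        have h2 : ((j:ℝ)/2)^(-q) = (2:ℝ)^q * (j:ℝ)^(-q) := by
          rw [div_eq_mul_inv, Real.mul_rpow hj0.le (by positivity),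
              Real.inv_rpow (by positivity), Real.rpow_neg (by positivity : (0:ℝ) ≤ 2),
              inv_inv]
          ring
        linarith
      have step1 : (k:ℝ)^(-q) * ((κ j - κ k)^4)⁻¹
          ≤ ((2:ℝ)^q * (j:ℝ)^(-q)) * ((C₀^4)⁻¹ * (d^4)⁻¹ * (j:ℝ)^(4*α+4)) := by
        exact mul_le_mul hkq hinv (by positivity) (by positivity)
      have step2 : ((2:ℝ)^q * (j:ℝ)^(-q)) * ((C₀^4)⁻¹ * (d^4)⁻¹ * (j:ℝ)^(4*α+4))
          = (C₀^4)⁻¹ * (2:ℝ)^q * ((d^4)⁻¹ * (j:ℝ)^e) := by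
        rw [show ((2:ℝ)^q * (j:ℝ)^(-q)) * ((C₀^4)⁻¹ * (d^4)⁻¹ * (j:ℝ)^(4*α+4))
            = (C₀^4)⁻¹ * (2:ℝ)^q * ((d^4)⁻¹ * ((j:ℝ)^(-q) * (j:ℝ)^(4*α+4))) from by ring,
          ← Real.rpow_add hj0]
        congr 3
        rw [hqdef, hedef]; ring
      have step3 : (C₀^4)⁻¹ * (2:ℝ)^q * ((d^4)⁻¹ * (j:ℝ)^e)
          ≤ (C₀^4)⁻¹ * (2:ℝ)^q * ((d^2)⁻¹ * (1 + (j:ℝ)^e)) := by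
        apply mul_le_mul_of_nonneg_left _ (by positivity)
        apply mul_le_mul _ (by linarith) hje (by positivity)
        exact hh_sq_le hd1
      apply hh_assemble (by positivity) ?_ (by positivity) (by positivity)
          (le_add_of_nonneg_left (by positivity)) (le_trans step1 (le_trans (le_of_eq step2) step3))
      exact mul_le_mul_of_nonneg_left (hM2 q (by linarith)) hC4.le
  · -- k > j
    rw [if_neg (by omega)]
    have hd1 : (1:ℝ) ≤ ((k-j:ℕ):ℝ) := by
      have : 1 ≤ k - j := by omega
      exact_mod_cast this
    set d : ℝ := ((k-j:ℕ):ℝ) with hddef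
    have hd0 : 0 < d := by linarith
    rcases le_or_gt k (2*j) with h2j | h2j
    · -- case 3 : j < k ≤ 2j
      have hg := hgapt j k hj hgt
      have hcpos : 0 < C₀ * d * (k:ℝ)^(-(α+1)) := by positivity
      have hinv : ((κ j - κ k)^4)⁻¹ ≤ ((C₀ * d * (k:ℝ)^(-(α+1)))^4)⁻¹ :=
        hh_inv_pow4_bound hcpos (Or.inl (by rw [hddef]; exact hg))
      have hc4 : ((C₀ * d * (k:ℝ)^(-(α+1)))^4)⁻¹
          = (C₀^4)⁻¹ * (d^4)⁻¹ * (k:ℝ)^(4*α+4) := by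
        rw [mul_pow, mul_pow, pow4 (k:ℝ) _ hk0.le, mul_inv, mul_inv,
            ← Real.rpow_neg hk0.le]
        rw [show -(-(α+1)*4) = 4*α+4 from by ring]
      rw [hc4] at hinv
      have hke : (k:ℝ)^e ≤ (2:ℝ)^(α+2) * (j:ℝ)^e := by
        have h2pow : (1:ℝ) ≤ (2:ℝ)^(α+2) := by
          rw [show (1:ℝ) = (2:ℝ)^(0:ℝ) from (Real.rpow_zero 2).symm]
          exact Real.rpow_le_rpow_of_exponent_le one_le_two (by linarith)
        rcases le_or_gt 0 e with he | he
        · have h1 : (k:ℝ)^e ≤ ((2:ℝ)*(j:ℝ))^e := by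
            apply Real.rpow_le_rpow hk0.le _ he
            exact_mod_cast h2j
          have h2 : ((2:ℝ)*(j:ℝ))^e = (2:ℝ)^e * (j:ℝ)^e :=
            Real.mul_rpow (by positivity) hj0.le
          have h3 : (2:ℝ)^e ≤ (2:ℝ)^(α+2) :=
            Real.rpow_le_rpow_of_exponent_le one_le_two heα
          calc (k:ℝ)^e ≤ (2:ℝ)^e * (j:ℝ)^e := by rw [← h2]; exact h1
            _ ≤ (2:ℝ)^(α+2) * (j:ℝ)^e := mul_le_mul_of_nonneg_right h3 hje
        · have h1 : (k:ℝ)^e ≤ (j:ℝ)^e :=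
            Real.rpow_le_rpow_of_nonpos hj0 (by exact_mod_cast hgt.le) he.le
          calc (k:ℝ)^e ≤ (j:ℝ)^e := h1
            _ = 1 * (j:ℝ)^e := by ring
            _ ≤ (2:ℝ)^(α+2) * (j:ℝ)^e := mul_le_mul_of_nonneg_right h2pow hje
      have step1 : (k:ℝ)^(-q) * ((κ j - κ k)^4)⁻¹
          ≤ (k:ℝ)^(-q) * ((C₀^4)⁻¹ * (d^4)⁻¹ * (k:ℝ)^(4*α+4)) :=
        mul_le_mul_of_nonneg_left hinv (Real.rpow_nonneg hk0.le _)
      have step2 : (k:ℝ)^(-q) * ((C₀^4)⁻¹ * (d^4)⁻¹ * (k:ℝ)^(4*α+4))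
          = (C₀^4)⁻¹ * ((d^4)⁻¹ * (k:ℝ)^e) := by
        rw [show (k:ℝ)^(-q) * ((C₀^4)⁻¹ * (d^4)⁻¹ * (k:ℝ)^(4*α+4))
            = (C₀^4)⁻¹ * ((d^4)⁻¹ * ((k:ℝ)^(-q) * (k:ℝ)^(4*α+4))) from by ring,
          ← Real.rpow_add hk0]
        congr 3
        rw [hqdef, hedef]; ring
      have step3 : (C₀^4)⁻¹ * ((d^4)⁻¹ * (k:ℝ)^e)
          ≤ (C₀^4)⁻¹ * (2:ℝ)^(α+2) * ((d^2)⁻¹ * (1 + (j:ℝ)^e)) := by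
        have hd42 : (d^4)⁻¹ ≤ (d^2)⁻¹ := hh_sq_le hd1
        have h1 : (d^4)⁻¹ * (k:ℝ)^e ≤ (d^2)⁻¹ * ((2:ℝ)^(α+2) * (j:ℝ)^e) := by
          apply mul_le_mul hd42 hke (Real.rpow_nonneg hk0.le e) (by positivity)
        calc (C₀^4)⁻¹ * ((d^4)⁻¹ * (k:ℝ)^e)
            ≤ (C₀^4)⁻¹ * ((d^2)⁻¹ * ((2:ℝ)^(α+2) * (j:ℝ)^e)) :=
              mul_le_mul_of_nonneg_left h1 hC4.le
          _ = (C₀^4)⁻¹ * (2:ℝ)^(α+2) * ((d^2)⁻¹ * (j:ℝ)^e) := by ring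
          _ ≤ (C₀^4)⁻¹ * (2:ℝ)^(α+2) * ((d^2)⁻¹ * (1 + (j:ℝ)^e)) := by
              apply mul_le_mul_of_nonneg_left _ (by positivity)
              apply mul_le_mul_of_nonneg_left (by linarith) (by positivity)
      apply hh_assemble (by positivity) ?_ (by positivity) (by positivity)
          (le_add_of_nonneg_left (by positivity)) (le_trans step1 (le_trans (le_of_eq step2) step3))
      exact mul_le_mul_of_nonneg_left (hM2 (α+2) (by linarith)) hC4.le
    · -- case 4 : k > 2j
      have hg := hgapt j (2*j) hj (by omega)
      have hmm : κ k ≤ κ (2*j) := hmont (2*j) k (by omega) (by omega)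
      have hsimp : C₀ * ((2*j - j:ℕ):ℝ) * ((2*j:ℕ):ℝ) ^ (-(α+1))
          = C₀ * (2:ℝ)^(-(α+1)) * (j:ℝ)^(-α) := by
        have h1 : ((2*j - j:ℕ):ℝ) = (j:ℝ) := by
          have : 2*j - j = j := by omega
          rw [this]
        have h2 : ((2*j:ℕ):ℝ) = 2*(j:ℝ) := by push_cast; ring
        rw [h1, h2, Real.mul_rpow (by norm_num) hj0.le]
        have h3 : (j:ℝ) * (j:ℝ)^(-(α+1)) = (j:ℝ)^(-α) := by
          nth_rewrite 1 [← Real.rpow_one (j:ℝ)]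
          rw [← Real.rpow_add hj0]
          congr 1; ring
        rw [show C₀ * (j:ℝ) * ((2:ℝ)^(-(α+1)) * (j:ℝ)^(-(α+1)))
            = C₀ * (2:ℝ)^(-(α+1)) * ((j:ℝ) * (j:ℝ)^(-(α+1))) from by ring, h3]
      have hcpos : 0 < C₀ * (2:ℝ)^(-(α+1)) * (j:ℝ)^(-α) := by positivity
      have hdiff : C₀ * (2:ℝ)^(-(α+1)) * (j:ℝ)^(-α) ≤ κ j - κ k := by
        rw [← hsimp]; linarith
      have hinv : ((κ j - κ k)^4)⁻¹ ≤ ((C₀ * (2:ℝ)^(-(α+1)) * (j:ℝ)^(-α))^4)⁻¹ :=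
        hh_inv_pow4_bound hcpos (Or.inl hdiff)
      have hc4 : ((C₀ * (2:ℝ)^(-(α+1)) * (j:ℝ)^(-α))^4)⁻¹
          = (C₀^4)⁻¹ * (2:ℝ)^(4*α+4) * (j:ℝ)^(4*α) := by
        rw [mul_pow, mul_pow, pow4 2 _ (by norm_num), pow4 (j:ℝ) _ hj0.le,
            mul_inv, mul_inv,
            ← Real.rpow_neg (by norm_num : (0:ℝ) ≤ 2), ← Real.rpow_neg hj0.le]
        rw [show -(-(α+1)*4) = 4*α+4 from by ring, show -(-α*4) = 4*α from by ring]
      rw [hc4] at hinv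
      have hksplit : (k:ℝ)^(-q) = (k:ℝ)^(-(2:ℝ)) * (k:ℝ)^(2-q) := by
        rw [← Real.rpow_add hk0]; congr 1; ring
      have hktail : (k:ℝ)^(2-q) ≤ (j:ℝ)^(2-q) := by
        apply Real.rpow_le_rpow_of_nonpos hj0 _ (by linarith)
        have : j ≤ k := by omega
        exact_mod_cast this
      have step1 : (k:ℝ)^(-q) * ((κ j - κ k)^4)⁻¹
          ≤ ((k:ℝ)^(-(2:ℝ)) * (j:ℝ)^(2-q)) * ((C₀^4)⁻¹ * (2:ℝ)^(4*α+4) * (j:ℝ)^(4*α)) := by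
        apply mul_le_mul _ hinv (by positivity) (by positivity)
        rw [hksplit]
        exact mul_le_mul_of_nonneg_left hktail (Real.rpow_nonneg hk0.le _)
      have step2 : ((k:ℝ)^(-(2:ℝ)) * (j:ℝ)^(2-q)) * ((C₀^4)⁻¹ * (2:ℝ)^(4*α+4) * (j:ℝ)^(4*α))
          = (C₀^4)⁻¹ * (2:ℝ)^(4*α+4) * ((k:ℝ)^(-(2:ℝ)) * (j:ℝ)^(e-2)) := by
        rw [show ((k:ℝ)^(-(2:ℝ)) * (j:ℝ)^(2-q)) * ((C₀^4)⁻¹ * (2:ℝ)^(4*α+4) * (j:ℝ)^(4*α))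
            = (C₀^4)⁻¹ * (2:ℝ)^(4*α+4) * ((k:ℝ)^(-(2:ℝ)) * ((j:ℝ)^(2-q) * (j:ℝ)^(4*α))) from by ring,
          ← Real.rpow_add hj0]
        congr 3
        rw [hqdef, hedef]; ring
      have step3 : (C₀^4)⁻¹ * (2:ℝ)^(4*α+4) * ((k:ℝ)^(-(2:ℝ)) * (j:ℝ)^(e-2))
          ≤ (C₀^4)⁻¹ * (2:ℝ)^(4*α+4) * ((((k:ℝ))^2)⁻¹ * (1 + (j:ℝ)^e)) := by
        rw [hkm2]
        apply mul_le_mul_of_nonneg_left _ (by positivity)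
        apply mul_le_mul_of_nonneg_left _ (by positivity)
        have : (j:ℝ)^(e-2) ≤ (j:ℝ)^e :=
          Real.rpow_le_rpow_of_exponent_le hj1 (by linarith)
        linarith
      apply hh_assemble (by positivity) ?_ (by positivity) (by positivity)
          (le_add_of_nonneg_right (by positivity)) (le_trans step1 (le_trans (le_of_eq step2) step3))
      exact mul_le_mul_of_nonneg_left (hM2 (4*α+4) (by linarith)) hC4.le


/-- Inequality (5.25) of Hall–Horowitz: under the eigenvalue spacing condition
`κ_j - κ_{j+1} ≥ C₀ j^{-(α+1)}`, for each `j ≥ 1` the series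
`Σ_{k ≠ j} k^{-2(α+β)} (κ_j - κ_k)^{-4}` is bounded by
`C₁ (1 + j^{2α-2β+4} + log (j+1))`.  (The series of nonnegative terms is expressed
through its partial sums over arbitrary finite sets of indices `k ≥ 1`, `k ≠ j`.) -/
theorem stmt_7
    (α β C₀ : ℝ) (hα : 1 < α) (hβ : α / 2 + 1 < β) (hC₀ : 0 < C₀)
    (κ : ℕ → ℝ)
    (hpos : ∀ j : ℕ, 1 ≤ j → 0 < κ j)
    (hmono : ∀ j : ℕ, 1 ≤ j → κ (j + 1) ≤ κ j)
    (hgap : ∀ j : ℕ, 1 ≤ j → C₀ * (j : ℝ) ^ (-(α + 1)) ≤ κ j - κ (j + 1)) :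
    ∃ C₁ : ℝ, 0 < C₁ ∧ ∀ j : ℕ, 1 ≤ j → ∀ s : Finset ℕ,
      (∀ k ∈ s, 1 ≤ k ∧ k ≠ j) →
      ∑ k ∈ s, (k : ℝ) ^ (-(2 * (α + β))) * ((κ j - κ k) ^ 4)⁻¹
        ≤ C₁ * (1 + (j : ℝ) ^ (2 * α - 2 * β + 4) + Real.log ((j : ℝ) + 1)) := by
  classical
  set M : ℝ := (C₀^4)⁻¹ * (2:ℝ)^(4*α+4+2*(α+β)) with hMdef
  have hM0 : 0 < M := by positivity
  refine ⟨6 * M, by positivity, ?_⟩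
  intro j hj s hs
  set P : ℝ := 1 + (j:ℝ)^(2*α-2*β+4) with hPdef
  have hP0 : 0 ≤ P := by positivity
  have hpt : ∀ k ∈ s, (k : ℝ) ^ (-(2 * (α + β))) * ((κ j - κ k) ^ 4)⁻¹
      ≤ M * P * ((((k:ℝ))^2)⁻¹ + (((if k < j then j - k else k - j : ℕ):ℝ)^2)⁻¹) :=
    fun k hk => hh_pointwise α β C₀ hα hβ hC₀ κ hmono hgap j k hj (hs k hk).1 (hs k hk).2
  have hsum1 : ∑ k ∈ s, (k : ℝ) ^ (-(2 * (α + β))) * ((κ j - κ k) ^ 4)⁻¹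
      ≤ M * P * ∑ k ∈ s, ((((k:ℝ))^2)⁻¹ + (((if k < j then j - k else k - j : ℕ):ℝ)^2)⁻¹) := by
    rw [Finset.mul_sum]
    exact Finset.sum_le_sum hpt
  have hwk : ∑ k ∈ s, (((k:ℝ))^2)⁻¹ ≤ 2 := hh_invsq_sum s (fun k hk => (hs k hk).1)
  have hsplit : ∑ k ∈ s, ((((if k < j then j - k else k - j : ℕ)):ℝ)^2)⁻¹
      = (∑ k ∈ s.filter (fun k => k < j), ((((j - k:ℕ)):ℝ)^2)⁻¹)
      + (∑ k ∈ s.filter (fun k => ¬ k < j), ((((k - j:ℕ)):ℝ)^2)⁻¹) := by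
    rw [← Finset.sum_filter_add_sum_filter_not s (fun k => k < j)]
    congr 1
    · exact Finset.sum_congr rfl (fun k hk => by rw [if_pos (Finset.mem_filter.1 hk).2])
    · exact Finset.sum_congr rfl (fun k hk => by rw [if_neg (Finset.mem_filter.1 hk).2])
  have hlt2 : ∑ k ∈ s.filter (fun k => k < j), ((((j - k:ℕ)):ℝ)^2)⁻¹ ≤ 2 := by
    have himg := Finset.sum_image (s := s.filter (fun k => k < j))
      (f := fun m : ℕ => (((m:ℝ))^2)⁻¹) (g := fun k => j - k)
      (fun x hx y hy h => by
        simp only [Finset.mem_coe, Finset.mem_filter] at hx hy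
        have h' : j - x = j - y := h
        omega)
    rw [← himg]
    apply hh_invsq_sum
    intro m hm
    simp only [Finset.mem_image, Finset.mem_filter] at hm
    obtain ⟨k, ⟨hks, hklt⟩, rfl⟩ := hm
    omega
  have hgt2 : ∑ k ∈ s.filter (fun k => ¬ k < j), ((((k - j:ℕ)):ℝ)^2)⁻¹ ≤ 2 := by
    have himg := Finset.sum_image (s := s.filter (fun k => ¬ k < j))
      (f := fun m : ℕ => (((m:ℝ))^2)⁻¹) (g := fun k => k - j)
      (fun x hx y hy h => by
        simp only [Finset.mem_coe, Finset.mem_filter] at hx hy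
        have h' : x - j = y - j := h
        omega)
    rw [← himg]
    apply hh_invsq_sum
    intro m hm
    simp only [Finset.mem_image, Finset.mem_filter] at hm
    obtain ⟨k, ⟨hks, hklt⟩, rfl⟩ := hm
    have := (hs k hks).2
    omega
  have hsum2 : ∑ k ∈ s, ((((k:ℝ))^2)⁻¹ + (((if k < j then j - k else k - j : ℕ):ℝ)^2)⁻¹) ≤ 6 := by
    rw [Finset.sum_add_distrib, hsplit]
    linarith
  have hlog : 0 ≤ Real.log ((j:ℝ)+1) := Real.log_nonneg (by
    have : (1:ℝ) ≤ j := by exact_mod_cast hj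
    linarith)
  refine hsum1.trans ?_
  have h1 : M * P * (∑ k ∈ s, ((((k:ℝ))^2)⁻¹ + (((if k < j then j - k else k - j : ℕ):ℝ)^2)⁻¹))
      ≤ M * P * 6 := mul_le_mul_of_nonneg_left hsum2 (by positivity)
  nlinarith [h1, mul_nonneg hM0.le hlog, mul_nonneg hM0.le hP0]
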